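/- Let S be a monoid generated by X = {x₁,…,xₙ} which is of I-type, i.e., there is a bijection v : ℕⁿ → S with v(0) = 1 and, for all a ∈ ℕⁿ, {v(a + e₁),…, v(a + eₙ)} = {x₁ v(a),…, xₙ v(a)} (where e_i are the standard basis vectors). Then S is right cancellative: if s x = t x in S then s = t. -/

import Mathlib

theorem I_type_right_cancellative {n : ℕ} {S : Type*} [Monoid S]
    (x : Fin n → S) (hgen : Submonoid.closure (Set.range x) = ⊤)
    (v : (Fin n → ℕ) → S) (hbij : Function.Bijective v) (hone : v 0 = 1)
    (hI : ∀ a : Fin n → ℕ,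
      Set.range (fun i => v (a + Pi.single i 1)) =
        Set.range (fun i => x i * v a)) :
    ∀ s t u : S, s * u = t * u → s = t := by
  -- extraction lemmas from the I-structure
  have h1 : ∀ (a : Fin n → ℕ) (i : Fin n), ∃ j, v (a + Pi.single i 1) = x j * v a := by
    intro a i
    have h : v (a + Pi.single i 1) ∈ Set.range (fun i => x i * v a) := by
      rw [← hI a]; exact Set.mem_range_self i
    obtain ⟨j, hj⟩ := h
    exact ⟨j, hj.symm⟩
  have h2 : ∀ (a : Fin n → ℕ) (i : Fin n), ∃ j, x i * v a = v (a + Pi.single j 1) := by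
    intro a i
    have h : x i * v a ∈ Set.range (fun i => v (a + Pi.single i 1)) := by
      rw [hI a]; exact Set.mem_range_self i
    obtain ⟨j, hj⟩ := h
    exact ⟨j, hj.symm⟩
  -- decomposition of a positive-sum vector
  have hdec : ∀ (b : Fin n → ℕ) (d : ℕ), (∑ i, b i = d + 1) →
      ∃ (b'' : Fin n → ℕ) (k : Fin n), b = b'' + Pi.single k 1 ∧ ∑ i, b'' i = d := by
    intro b d hsum
    have hk : ∃ k, b k ≠ 0 := by
      by_contra h
      push_neg at h
      simp [h] at hsum
    obtain ⟨k, hk⟩ := hk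
    refine ⟨fun i => b i - Pi.single (M := fun _ => ℕ) k 1 i, k, ?_, ?_⟩
    · funext i
      by_cases hik : i = k
      · subst hik; simp only [Pi.add_apply, Pi.single_eq_same]; omega
      · simp [Pi.single_apply, hik]
    · have hsplit : ∑ i, ((fun i => b i - Pi.single (M := fun _ => ℕ) k 1 i) i + Pi.single (M := fun _ => ℕ) k 1 i) = ∑ i, b i := by
        apply Finset.sum_congr rfl
        intro i _
        by_cases hik : i = k
        · subst hik; simp only [Pi.single_eq_same]; omega
        · simp [Pi.single_apply, hik]
      rw [Finset.sum_add_distrib] at hsplit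
      have hsing : ∑ i, Pi.single k 1 i = 1 := by simp
      beta_reduce at hsplit ⊢
      omega
  -- well-definedness: v b * v a = v (a + c) with ∑ c = ∑ b
  have hwd : ∀ (d : ℕ) (b : Fin n → ℕ), (∑ i, b i = d) → ∀ a,
      ∃ c, (∑ i, c i = d) ∧ v b * v a = v (a + c) := by
    intro d
    induction d with
    | zero =>
      intro b hb a
      have hb0 : b = 0 := by
        funext i
        have := Finset.sum_eq_zero_iff.mp hb i (Finset.mem_univ i)
        simpa using this
      refine ⟨0, by simp, ?_⟩
      rw [hb0, hone, one_mul, add_zero]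
    | succ d ih =>
      intro b hb a
      obtain ⟨b'', k, hbk, hb''⟩ := hdec b d hb
      obtain ⟨m, hm⟩ := h1 b'' k
      obtain ⟨c'', hc''sum, hc''⟩ := ih b'' hb'' a
      obtain ⟨j, hj⟩ := h2 (a + c'') m
      refine ⟨c'' + Pi.single j 1, ?_, ?_⟩
      · simp only [Pi.add_apply, Finset.sum_add_distrib, hc''sum]
        simp
      · rw [hbk, hm, mul_assoc, hc'', hj, ← add_assoc]
  -- surjectivity: every v (a + c) is of the form v b * v a with ∑ b = ∑ c
  have hsurj : ∀ (d : ℕ) (c : Fin n → ℕ), (∑ i, c i = d) → ∀ a,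
      ∃ b, (∑ i, b i = d) ∧ v b * v a = v (a + c) := by
    intro d
    induction d with
    | zero =>
      intro c hc a
      have hc0 : c = 0 := by
        funext i
        have := Finset.sum_eq_zero_iff.mp hc i (Finset.mem_univ i)
        simpa using this
      refine ⟨0, by simp, ?_⟩
      rw [hc0, hone, one_mul, add_zero]
    | succ d ih =>
      intro c hc a
      obtain ⟨c'', k, hck, hc''⟩ := hdec c d hc
      obtain ⟨m, hm⟩ := h1 (a + c'') k
      obtain ⟨b'', hb''sum, hb''⟩ := ih c'' hc'' a
      obtain ⟨j, hj⟩ := h2 b'' m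
      refine ⟨b'' + Pi.single j 1, ?_, ?_⟩
      · simp only [Pi.add_apply, Finset.sum_add_distrib, hb''sum]
        simp
      · rw [← hj, mul_assoc, hb'', ← hm, hck, ← add_assoc]
  -- finiteness of each degree level
  have hfin : ∀ d : ℕ, Finite {c : Fin n → ℕ // ∑ i, c i = d} := by
    intro d
    apply Finite.of_injective (fun c => (fun i => (⟨c.1 i, by
      have hle : c.1 i ≤ d := by
        have h5 := Finset.single_le_sum (f := c.1) (fun i _ => Nat.zero_le _) (Finset.mem_univ i)
        rw [c.2] at h5
        exact h5
      omega⟩ : Fin (d + 1))))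
    intro c c' h
    apply Subtype.ext
    funext i
    have := congrFun h i
    simpa using congrArg Fin.val this
  -- main argument
  intro s t u hst
  obtain ⟨a, rfl⟩ := hbij.2 u
  obtain ⟨b, rfl⟩ := hbij.2 s
  obtain ⟨b', rfl⟩ := hbij.2 t
  set d := ∑ i, b i with hd
  obtain ⟨c, hcsum, hc⟩ := hwd d b hd.symm a
  obtain ⟨c', hc'sum, hc'⟩ := hwd (∑ i, b' i) b' rfl a
  have hcc : c = c' := by
    have he : v (a + c) = v (a + c') := by rw [← hc, ← hc', hst]
    exact add_left_cancel (hbij.1 he)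
  have hb'sum : ∑ i, b' i = d := by rw [← hc'sum, ← hcc, hcsum]
  haveI := hfin d
  set T := {c : Fin n → ℕ // ∑ i, c i = d} with hT
  let G : T → T := fun p => ⟨(hwd d p.1 p.2 a).choose, (hwd d p.1 p.2 a).choose_spec.1⟩
  have hG : ∀ p : T, v p.1 * v a = v (a + (G p).1) := fun p => (hwd d p.1 p.2 a).choose_spec.2
  have hGsurj : Function.Surjective G := by
    intro q
    obtain ⟨b0, hb0sum, hb0⟩ := hsurj d q.1 q.2 a
    refine ⟨⟨b0, hb0sum⟩, ?_⟩
    apply Subtype.ext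
    have h4 : v (a + (G ⟨b0, hb0sum⟩).1) = v (a + q.1) := by
      rw [← hG ⟨b0, hb0sum⟩, hb0]
    exact add_left_cancel (hbij.1 h4)
  have hGinj : Function.Injective G := Finite.injective_iff_surjective.mpr hGsurj
  have hp : G ⟨b, hd.symm⟩ = G ⟨b', hb'sum⟩ := by
    apply Subtype.ext
    have e1 : v (a + (G ⟨b, hd.symm⟩).1) = v (a + (G ⟨b', hb'sum⟩).1) := by
      rw [← hG, ← hG, hst]
    exact add_left_cancel (hbij.1 e1)
  have hbb := hGinj hp
  exact congrArg v (congrArg Subtype.val hbb)
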